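/- arXiv:0804.3764 — 2 statements merged into one kernel-verified Lean document; each statement's English description precedes it below -/
import Mathlib

section
/- Let A be a Banach algebra and E a closed subspace of the dual A' such that the natural map ι_E : A → E' (given by ι_E(a)(μ) = μ(a)) is an isomorphism of Banach spaces. Then the multiplication on A is separately continuous for the weak* topology σ(A, E) if and only if E is a sub-bimodule of A' for the canonical A-bimodule actions on A'. -/
open NormedSpace

/-- The weak* topology `σ(A, E)` on `A` induced by a subspace `E` of the dual `A'`. -/
noncomputable def weakStarTopology {A : Type*} [NormedRing A] [NormedAlgebra ℂ A]
    (E : Submodule ℂ (StrongDual ℂ A)) : TopologicalSpace A :=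
  TopologicalSpace.induced (fun a => fun μ : E => (μ : StrongDual ℂ A) a) inferInstance

/-- Every element of `E` is `σ(A,E)`-continuous. -/
lemma weakStar_continuous_of_mem {A : Type*} [NormedRing A] [NormedAlgebra ℂ A]
    (E : Submodule ℂ (StrongDual ℂ A)) {μ : StrongDual ℂ A} (hμ : μ ∈ E) :
    @Continuous A ℂ (weakStarTopology E) _ μ := by
  letI : TopologicalSpace A := weakStarTopology E
  have h1 : Continuous (fun a : A => fun ν : E => ν.1 a) :=
    continuous_induced_dom
  exact (continuous_apply (⟨μ, hμ⟩ : E)).comp h1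

/-- A `σ(A,E)`-continuous functional lies in `E`. -/
lemma mem_of_weakStar_continuous {A : Type*} [NormedRing A] [NormedAlgebra ℂ A]
    (E : Submodule ℂ (StrongDual ℂ A)) (f : StrongDual ℂ A)
    (hf : @Continuous A ℂ (weakStarTopology E) _ f) : f ∈ E := by
  obtain ⟨I, hker⟩ : ∃ I : Finset E,
      ∀ a : A, (∀ μ ∈ I, ((μ : E) : StrongDual ℂ A) a = 0) → f a = 0 := by
    letI : TopologicalSpace A := weakStarTopology E
    set ι : A → (E → ℂ) := fun a => fun μ : E => μ.1 a with hι
    have hopen : IsOpen (f ⁻¹' Metric.ball 0 1) :=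
      hf.isOpen_preimage _ Metric.isOpen_ball
    obtain ⟨U, hU, hUeq⟩ :=
      (@isOpen_induced_iff A (E → ℂ) _ (f ⁻¹' Metric.ball 0 1) ι).mp hopen
    have h0 : ι 0 ∈ U := by
      have : (0 : A) ∈ ι ⁻¹' U := by
        rw [hUeq]
        simp [Metric.mem_ball]
      exact this
    obtain ⟨I, u, h1, h2⟩ := isOpen_pi_iff.mp hU (ι 0) h0
    -- key kernel inclusion
    refine ⟨I, fun a ha => ?_⟩
    by_contra hfa
    have hbound : ∀ c : ℂ, ‖f (c • a)‖ < 1 := by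
      intro c
      have hmem : ι (c • a) ∈ (I : Set E).pi u := by
        intro μ hμ
        have h0u : (0 : ℂ) ∈ u μ := by
          have := (h1 μ hμ).2
          simpa [hι, map_zero] using this
        have : ι (c • a) μ = 0 := by
          simp [hι, map_smul, ha μ hμ]
        rw [this]; exact h0u
      have : c • a ∈ f ⁻¹' Metric.ball 0 1 := by
        rw [← hUeq]
        exact h2 hmem
      simpa [Metric.mem_ball, dist_eq_norm] using this
    have hpos : 0 < ‖f a‖ := norm_pos_iff.mpr hfa
    have := hbound ((‖f a‖⁻¹ : ℝ) : ℂ)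
    rw [map_smul, norm_smul] at this
    simp only [Complex.norm_real, Real.norm_eq_abs, abs_of_pos (inv_pos.mpr hpos)] at this
    rw [inv_mul_cancel₀ (ne_of_gt hpos)] at this
    exact lt_irrefl 1 this
  -- conclude via mem_span_of_iInf_ker_le_ker
  haveI : Fintype {x // x ∈ I} := FinsetCoe.fintype I
  haveI : Finite {x // x ∈ I} := Finite.of_fintype _
  have hspan : (f : A →ₗ[ℂ] ℂ) ∈ Submodule.span ℂ
      (Set.range fun μ : {x // x ∈ I} => (((μ : E) : StrongDual ℂ A) : A →ₗ[ℂ] ℂ)) := by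
    apply mem_span_of_iInf_ker_le_ker
    intro a ha
    simp only [Submodule.mem_iInf, LinearMap.mem_ker] at ha
    simp only [LinearMap.mem_ker, ContinuousLinearMap.coe_coe]
    exact hker a fun μ hμ => ha ⟨μ, hμ⟩
  have hmap : (f : A →ₗ[ℂ] ℂ) ∈ E.map (ContinuousLinearMap.coeLM ℂ) := by
    refine Submodule.span_le.mpr ?_ hspan
    rintro _ ⟨μ, rfl⟩
    exact ⟨((μ : E) : StrongDual ℂ A), (μ : E).2, rfl⟩
  obtain ⟨g, hg, hgf⟩ := hmap
  have : g = f := ContinuousLinearMap.coe_injective hgf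
  exact this ▸ hg

/-- A map whose compositions with all elements of `E` lie in `E` is
`σ(A,E)`-`σ(A,E)`-continuous. -/
lemma weakStar_continuous_of_comp {A : Type*} [NormedRing A] [NormedAlgebra ℂ A]
    (E : Submodule ℂ (StrongDual ℂ A)) (g : A → A)
    (h : ∀ μ : E, ∃ ν ∈ E, ∀ b, (μ : StrongDual ℂ A) (g b) = ν b) :
    @Continuous A A (weakStarTopology E) (weakStarTopology E) g := by
  letI : TopologicalSpace A := weakStarTopology E
  refine continuous_induced_rng.mpr (continuous_pi fun μ => ?_)
  obtain ⟨ν, hν, hcomp⟩ := h μ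
  have heq : (fun b : A => μ.1 (g b)) = fun b => ν b := funext hcomp
  show Continuous fun b : A => μ.1 (g b)
  rw [heq]
  exact weakStar_continuous_of_mem E hν

/-- If `g` is `σ(A,E)`-continuous and `ν = μ ∘ g` with `μ ∈ E`, then `ν ∈ E`. -/
lemma weakStar_comp_mem {A : Type*} [NormedRing A] [NormedAlgebra ℂ A]
    (E : Submodule ℂ (StrongDual ℂ A)) (g : A → A) (ν : StrongDual ℂ A)
    (hg : @Continuous A A (weakStarTopology E) (weakStarTopology E) g)
    {μ : StrongDual ℂ A} (hμ : μ ∈ E) (hν : ∀ b, ν b = μ (g b)) : ν ∈ E := by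
  apply mem_of_weakStar_continuous
  letI : TopologicalSpace A := weakStarTopology E
  have heq : ⇑ν = fun b => μ (g b) := funext hν
  show Continuous ⇑ν
  rw [heq]
  exact (weakStar_continuous_of_mem E hμ).comp hg

/-- For a Banach algebra `A` and a closed subspace `E ⊆ A'` such that the natural map
`ι_E : A → E'` is an isomorphism, the multiplication of `A` is separately
`σ(A,E)`-continuous if and only if `E` is a sub-bimodule of `A'` for the canonical
`A`-bimodule actions. -/
theorem weakStar_separately_continuous_iff_submodule
    (A : Type*) [NormedRing A] [NormedAlgebra ℂ A] [CompleteSpace A]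
    (E : Submodule ℂ (StrongDual ℂ A)) (hclosed : IsClosed (E : Set (StrongDual ℂ A)))
    (hiso : Function.Bijective fun a : A => (inclusionInDoubleDual ℂ A a).comp E.subtypeL) :
    (∀ a : A,
        @Continuous A A (weakStarTopology E) (weakStarTopology E) (fun b : A => a * b) ∧
        @Continuous A A (weakStarTopology E) (weakStarTopology E) (fun b : A => b * a)) ↔
      (∀ (a : A), ∀ μ ∈ E,
        μ.comp (ContinuousLinearMap.mul ℂ A a) ∈ E ∧
        μ.comp ((ContinuousLinearMap.mul ℂ A).flip a) ∈ E) := by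
  constructor
  · intro hcont a μ hμ
    refine ⟨weakStar_comp_mem E (fun b => a * b) _ (hcont a).1 hμ fun b => ?_,
      weakStar_comp_mem E (fun b => b * a) _ (hcont a).2 hμ fun b => ?_⟩
    · simp [ContinuousLinearMap.mul_apply']
    · simp [ContinuousLinearMap.mul_apply']
  · intro hE a
    refine ⟨weakStar_continuous_of_comp E _ fun μ =>
        ⟨_, (hE a μ μ.2).1, fun b => ?_⟩,
      weakStar_continuous_of_comp E _ fun μ =>
        ⟨_, (hE a μ μ.2).2, fun b => ?_⟩⟩
    · simp [ContinuousLinearMap.mul_apply']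
    · simp [ContinuousLinearMap.mul_apply']
end

section
/- Let M be a unital C*-algebra spanned by its unitaries (e.g. a von Neumann algebra or any unital C*-algebra), let C be a unital C*-algebra, and let α : M → C be an isometric unital algebra homomorphism. Then α is *-preserving: α(x*) = α(x)* for all x ∈ M. -/
/-- An invertible element of a unital C*-algebra whose norm and the norm of whose
inverse are at most one satisfies `star a = a⁻¹`. -/
lemma star_eq_inv_of_norm_le_one {C : Type*} [NormedRing C] [StarRing C] [CStarRing C]
    [CompleteSpace C] [NormedAlgebra ℂ C] [StarModule ℂ C]
    (a : Cˣ) (h1 : ‖(a : C)‖ ≤ 1) (h2 : ‖((a⁻¹ : Cˣ) : C)‖ ≤ 1) :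
    star (a : C) = ((a⁻¹ : Cˣ) : C) := by
  letI : CStarAlgebra C := ⟨⟩
  letI := CStarAlgebra.spectralOrder C
  letI := CStarAlgebra.spectralOrderedRing C
  -- the unit `star a * a`
  set b : Cˣ := star a * a with hb
  have hbval : (b : C) = star (a : C) * (a : C) := by simp [hb]
  have hb0 : (0 : C) ≤ (b : C) := hbval ▸ star_mul_self_nonneg (a : C)
  have hbnorm : ‖(b : C)‖ ≤ 1 := by
    rw [hbval]
    calc ‖star (a : C) * (a : C)‖ ≤ ‖star (a : C)‖ * ‖(a : C)‖ := norm_mul_le _ _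
    _ ≤ 1 * 1 := by
        gcongr <;> simp [norm_star, h1]
    _ = 1 := one_mul 1
  have hbinvval : ((b⁻¹ : Cˣ) : C) = ((a⁻¹ : Cˣ) : C) * star ((a⁻¹ : Cˣ) : C) := by
    refine Units.inv_eq_of_mul_eq_one_right ?_
    rw [hbval]
    calc star (a : C) * (a : C) * (((a⁻¹ : Cˣ) : C) * star ((a⁻¹ : Cˣ) : C))
        = star (a : C) * ((a : C) * ((a⁻¹ : Cˣ) : C)) * star ((a⁻¹ : Cˣ) : C) := by
          simp only [mul_assoc]
      _ = star (((a⁻¹ : Cˣ) : C) * (a : C)) := by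
          rw [a.mul_inv, mul_one, ← star_mul]
      _ = 1 := by rw [a.inv_mul, star_one]
  have hbinv0 : (0 : C) ≤ ((b⁻¹ : Cˣ) : C) := hbinvval ▸ mul_star_self_nonneg _
  have hbinvnorm : ‖((b⁻¹ : Cˣ) : C)‖ ≤ 1 := by
    rw [hbinvval]
    calc ‖((a⁻¹ : Cˣ) : C) * star ((a⁻¹ : Cˣ) : C)‖
        ≤ ‖((a⁻¹ : Cˣ) : C)‖ * ‖star ((a⁻¹ : Cˣ) : C)‖ := norm_mul_le _ _
      _ ≤ 1 * 1 := by gcongr <;> simp [norm_star, h2]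
      _ = 1 := one_mul 1
  have hle : (b : C) ≤ 1 := (CStarAlgebra.norm_le_one_iff_of_nonneg _ hb0).mp hbnorm
  have hinvle : ((b⁻¹ : Cˣ) : C) ≤ 1 :=
    (CStarAlgebra.norm_le_one_iff_of_nonneg _ hbinv0).mp hbinvnorm
  have hge : (1 : C) ≤ (b : C) := (CStarAlgebra.inv_le_one_iff_one_le hb0).mp hinvle
  have hb1 : star (a : C) * (a : C) = 1 := by
    rw [← hbval]; exact le_antisymm hle hge
  calc star (a : C) = star (a : C) * ((a : C) * ((a⁻¹ : Cˣ) : C)) := by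
        rw [a.mul_inv, mul_one]
    _ = (star (a : C) * (a : C)) * ((a⁻¹ : Cˣ) : C) := by simp only [mul_assoc]
    _ = ((a⁻¹ : Cˣ) : C) := by rw [hb1, one_mul]

/-- An isometric unital algebra homomorphism from a unital C*-algebra spanned by its
unitaries into a unital C*-algebra is automatically *-preserving. -/
theorem isometric_algHom_star_preserving
    (M C : Type*) [NormedRing M] [StarRing M] [CStarRing M] [CompleteSpace M]
    [NormedAlgebra ℂ M] [StarModule ℂ M]
    [NormedRing C] [StarRing C] [CStarRing C] [CompleteSpace C]
    [NormedAlgebra ℂ C] [StarModule ℂ C]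
    (hspan : Submodule.span ℂ (unitary M : Set M) = ⊤)
    (α : M →ₐ[ℂ] C) (hiso : ∀ x : M, ‖α x‖ = ‖x‖) :
    ∀ x : M, α (star x) = star (α x) := by
  -- the conjugated map `x ↦ star (α (star x))` is ℂ-linear
  let β : M →ₗ[ℂ] C :=
    { toFun := fun x => star (α (star x))
      map_add' := fun x y => by simp [star_add, map_add]
      map_smul' := fun c x => by simp [star_smul, map_smul] }
  have key : ∀ u ∈ unitary M, α u = β u := by
    intro u hu
    rcases subsingleton_or_nontrivial M with hM | hM
    · have : u = 0 := Subsingleton.elim _ _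
      simp [β, this]
    · -- `α u` is a unit with inverse `α (star u)`
      have h1 : (α u) * α (star u) = 1 := by
        rw [← map_mul, (Unitary.mem_iff.mp hu).2, map_one]
      have h2 : α (star u) * (α u) = 1 := by
        rw [← map_mul, (Unitary.mem_iff.mp hu).1, map_one]
      let a : Cˣ := ⟨α u, α (star u), h1, h2⟩
      have hn1 : ‖(a : C)‖ ≤ 1 := by
        simpa [a, hiso] using (CStarRing.norm_of_mem_unitary hu).le
      have hn2 : ‖((a⁻¹ : Cˣ) : C)‖ ≤ 1 := by
        have : ((a⁻¹ : Cˣ) : C) = α (star u) := rfl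
        rw [this, hiso, norm_star, CStarRing.norm_of_mem_unitary hu]
      have := star_eq_inv_of_norm_le_one a hn1 hn2
      have hstar : star (α u) = α (star u) := this
      simp only [β, LinearMap.coe_mk, AddHom.coe_mk]
      rw [← hstar, star_star]
  have main : ∀ x : M, α x = β x := by
    intro x
    have hx : x ∈ Submodule.span ℂ (unitary M : Set M) := hspan ▸ Submodule.mem_top
    exact LinearMap.eqOn_span (f := α.toLinearMap) (g := β) key hx
  intro x
  have := main (star x)
  simp only [β, LinearMap.coe_mk, AddHom.coe_mk, star_star] at this
  exact this
end
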